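/- Let τ ∈ S_d be non-monotone with |τ| − |x(τ)| = 2. Then the open interval (x(τ), τ) in the consecutive pattern poset contains exactly two elements. -/

import Mathlib

/-- Standardization of a list of distinct naturals: replace each entry by its rank
(the number of entries less than or equal to it). -/
def stdize (s : List ℕ) : List ℕ := s.map (fun x => (s.filter (· ≤ x)).length)

/-- All contiguous subwords (infixes) of a list. -/
def infixes (l : List ℕ) : List (List ℕ) := l.inits.flatMap List.tails

/-- `l` is a permutation of `{1,…,d}` where `d = l.length ≥ 1`; these are the
elements of the consecutive pattern poset. -/
def IsPermList (l : List ℕ) : Prop := l ≠ [] ∧ l.Perm (List.range' 1 l.length)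

/-- Consecutive pattern containment: `σ ≤ τ` iff `σ` is the standardization of
some contiguous subsequence of `τ`. -/
def PattLE (σ τ : List ℕ) : Prop := σ ∈ (infixes τ).map stdize

instance (σ τ : List ℕ) : Decidable (PattLE σ τ) :=
  inferInstanceAs (Decidable (σ ∈ (infixes τ).map stdize))

/-- A permutation is monotone if its letters strictly increase or strictly decrease. -/
def MonotoneList (l : List ℕ) : Prop := l.Chain' (· < ·) ∨ l.Chain' (· > ·)

/-- The interior `i(τ)`: standardization of `τ` with first and last letters removed. -/
def pattInterior (τ : List ℕ) : List ℕ := stdize τ.tail.dropLast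

/-- Length of the longest proper prefix of `τ` whose standardization is also the
standardization of a suffix of `τ`. -/
def extLen (τ : List ℕ) : ℕ :=
  Nat.findGreatest (fun k => stdize (τ.take k) = stdize (τ.drop (τ.length - k))) (τ.length - 1)

/-- The exterior `x(τ)`: the longest permutation that is both a proper prefix and a
suffix of `τ`. -/
def pattExterior (τ : List ℕ) : List ℕ := stdize (τ.take (extLen τ))

/-- The closed interval `[σ,τ]` in the consecutive pattern poset, as a `Finset`. -/
def pattInterval (σ τ : List ℕ) : Finset (List ℕ) :=
  ((infixes τ).map stdize).toFinset.filter (fun z => PattLE σ z)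

/-- The open interval `(σ,τ)` in the consecutive pattern poset, as a `Finset`. -/
def openPattInterval (σ τ : List ℕ) : Finset (List ℕ) :=
  ((infixes τ).map stdize).toFinset.filter (fun z => PattLE σ z ∧ z ≠ σ ∧ z ≠ τ)

/-- `τ` covers `σ` in the consecutive pattern poset: `σ < τ` and no element lies
strictly between them. -/
def CoveredBy (σ τ : List ℕ) : Prop :=
  PattLE σ τ ∧ σ ≠ τ ∧ ¬ ∃ ρ, IsPermList ρ ∧ PattLE σ ρ ∧ PattLE ρ τ ∧ ρ ≠ σ ∧ ρ ≠ τ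

/-- `c` is a maximal chain of the interval `[σ,τ]`: it starts at `τ`, ends at `σ`,
and each element covers the next. -/
def IsMaxChainPatt (σ τ : List ℕ) (c : List (List ℕ)) : Prop :=
  c.head? = some τ ∧ c.getLast? = some σ ∧ c.Chain' (fun a b => CoveredBy b a)

lemma length_stdize (l : List ℕ) : (stdize l).length = l.length := by simp [stdize]

lemma mem_infixes {w l : List ℕ} : w ∈ infixes l ↔ w <:+: l := by
  simp only [infixes, List.mem_flatMap, List.mem_inits, List.mem_tails]
  constructor
  · rintro ⟨p, hp, hw⟩
    exact hw.isInfix.trans hp.isInfix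
  · rintro ⟨s, t, rfl⟩
    exact ⟨s ++ w, ⟨t, by simp⟩, ⟨s, rfl⟩⟩

lemma filter_le_sublist (w : List ℕ) {x a : ℕ} (h : x ≤ a) :
    (w.filter (· ≤ x)).Sublist (w.filter (· ≤ a)) := by
  have heq : w.filter (· ≤ x) = (w.filter (· ≤ a)).filter (· ≤ x) := by
    rw [List.filter_filter]
    apply List.filter_congr
    intro b _
    by_cases hb : b ≤ x <;> simp [hb] <;> omega
  rw [heq]
  exact List.filter_sublist

lemma rank_lt {w : List ℕ} {x a : ℕ} (ha : a ∈ w) (hxa : x < a) :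
    (w.filter (· ≤ x)).length < (w.filter (· ≤ a)).length := by
  have hsub := filter_le_sublist w hxa.le
  rcases lt_or_eq_of_le hsub.length_le with h | h
  · exact h
  · exfalso
    have heq := hsub.eq_of_length h
    have ha' : a ∈ w.filter (· ≤ a) := List.mem_filter.mpr ⟨ha, by simp⟩
    rw [← heq] at ha'
    have := (List.mem_filter.mp ha').2
    simp at this
    omega

lemma rank_iff {w : List ℕ} {a x : ℕ} (ha : a ∈ w) (hx : x ∈ w) :
    ((w.filter (· ≤ a)).length ≤ (w.filter (· ≤ x)).length) ↔ a ≤ x := by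
  constructor
  · intro h
    by_contra hc
    push_neg at hc
    exact absurd h (not_le.mpr (rank_lt ha hc))
  · intro h
    rcases eq_or_lt_of_le h with rfl | h
    · exact le_rfl
    · exact (rank_lt hx h).le

lemma stdize_map {u : List ℕ} {f : ℕ → ℕ} (hf : ∀ a ∈ u, ∀ x ∈ u, (f a ≤ f x ↔ a ≤ x)) :
    stdize (u.map f) = stdize u := by
  unfold stdize
  rw [List.map_map]
  apply List.map_congr_left
  intro x hx
  simp only [Function.comp]
  rw [List.filter_map, List.length_map]
  congr 1
  apply List.filter_congr
  intro a ha
  simp only [Function.comp_apply, decide_eq_decide]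
  exact hf a ha x hx

lemma infixes_map (f : ℕ → ℕ) (l : List ℕ) :
    infixes (l.map f) = (infixes l).map (List.map f) := by
  simp only [infixes, List.map_inits, List.flatMap_map, List.map_flatMap]
  apply List.flatMap_congr
  intro p _
  exact List.map_tails f

lemma map_stdize_infixes {w : List ℕ} :
    (infixes (stdize w)).map stdize = (infixes w).map stdize := by
  rw [show stdize w = w.map (fun x => (w.filter (· ≤ x)).length) from rfl, infixes_map,
    List.map_map]
  apply List.map_congr_left
  intro u hu
  have husub : u ⊆ w := (mem_infixes.mp hu).subset
  exact stdize_map (fun a ha x hx => rank_iff (husub ha) (husub hx))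

lemma stdize_perm {l : List ℕ} (hl : l.Nodup) : (stdize l).Perm (List.range' 1 l.length) := by
  have hnodup : (stdize l).Nodup := by
    apply hl.map_on
    intro x hx y hy hxy
    rcases lt_trichotomy x y with h | h | h
    · exact absurd hxy (rank_lt hy h).ne
    · exact h
    · exact absurd hxy.symm (rank_lt hx h).ne
  have hsub : stdize l ⊆ List.range' 1 l.length := by
    intro m hm
    obtain ⟨x, hx, rfl⟩ := List.mem_map.mp hm
    rw [List.mem_range'_1]
    constructor
    · have : x ∈ l.filter (· ≤ x) := List.mem_filter.mpr ⟨hx, by simp⟩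
      exact List.length_pos_iff.mpr (List.ne_nil_of_mem this)
    · have := List.length_filter_le (· ≤ x) l
      omega
  exact (List.subperm_of_subset hnodup hsub).perm_of_length_le
    (by simp [length_stdize])

lemma filter_range'_length {n x : ℕ} (hx : x ≤ n) :
    ((List.range' 1 n).filter (· ≤ x)).length = x := by
  have h : List.range' 1 x ++ List.range' (1 + x) (n - x) = List.range' 1 n := by
    have := List.range'_append (s := 1) (m := x) (n := n - x) (step := 1)
    simp only [one_mul] at this
    rw [this]
    congr 1
    omega
  rw [← h, List.filter_append]
  have h1 : (List.range' 1 x).filter (· ≤ x) = List.range' 1 x := by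
    apply List.filter_eq_self.mpr
    intro a ha
    rw [List.mem_range'_1] at ha
    simp; omega
  have h2 : (List.range' (1 + x) (n - x)).filter (· ≤ x) = [] := by
    apply List.filter_eq_nil_iff.mpr
    intro a ha
    rw [List.mem_range'_1] at ha
    simp; omega
  rw [h1, h2]
  simp

lemma stdize_eq_self {l : List ℕ} (hl : l.Perm (List.range' 1 l.length)) : stdize l = l := by
  conv_rhs => rw [← List.map_id l]
  apply List.map_congr_left
  intro x hx
  have hx' : x ∈ List.range' 1 l.length := hl.subset hx
  rw [List.mem_range'_1] at hx'
  have : (l.filter (· ≤ x)).length = ((List.range' 1 l.length).filter (· ≤ x)).length := by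
    simp only [← List.countP_eq_length_filter]
    exact hl.countP_eq _
  rw [this, filter_range'_length (by omega)]
  rfl

lemma stdize_idem {w : List ℕ} (hw : w.Nodup) : stdize (stdize w) = stdize w := by
  apply stdize_eq_self
  rw [length_stdize]
  exact stdize_perm hw

lemma infix_length_pred {w l : List ℕ} (h : w <:+: l) (hlen : w.length + 1 = l.length) :
    w = l.take (l.length - 1) ∨ w = l.drop 1 := by
  obtain ⟨s, t, rfl⟩ := h
  rcases s with _ | ⟨a, s⟩
  · left
    simp only [List.nil_append, List.length_append] at hlen ⊢
    have ht : t.length = 1 := by omega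
    rw [ht, show w.length + 1 - 1 = w.length from rfl]
    exact List.take_left.symm
  · have hs : s.length = 0 ∧ t.length = 0 := by
      simp only [List.length_append, List.length_cons] at hlen
      omega
    obtain ⟨hs0, ht0⟩ := hs
    rw [List.length_eq_zero_iff] at hs0 ht0
    subst hs0; subst ht0
    right; simp

/-- For a non-monotone `τ` with `|τ| − |x(τ)| = 2`, the open interval `(x(τ), τ)`
contains exactly two elements. -/
theorem open_interval_exterior_card_two (τ : List ℕ) (hτ : IsPermList τ)
    (hm : ¬ MonotoneList τ) (h2 : τ.length = (pattExterior τ).length + 2) :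
    (openPattInterval (pattExterior τ) τ).card = 2 := by
  obtain ⟨hne, hperm⟩ := hτ
  have hnd : τ.Nodup := hperm.symm.nodup (List.nodup_range' (s := 1) (n := τ.length))
  have hd3 : 3 ≤ τ.length := by
    by_contra hc
    push_neg at hc
    apply hm
    rcases τ with _ | ⟨a, _ | ⟨b, _ | ⟨c, t⟩⟩⟩
    · exact absurd rfl hne
    · left; exact List.isChain_singleton a
    · have hab : a ≠ b := by
        simp only [List.nodup_cons, List.mem_singleton] at hnd
        exact hnd.1
      rcases lt_or_gt_of_ne hab with h | h
      · left; exact List.isChain_pair.mpr h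
      · right; exact List.isChain_pair.mpr h
    · simp only [List.length_cons] at hc; omega
  set e := extLen τ with he
  have hext_le : e ≤ τ.length - 1 := by rw [he]; exact Nat.findGreatest_le _
  have hxlen : (pattExterior τ).length = e := by
    simp only [pattExterior, length_stdize, List.length_take, ← he]
    omega
  rw [hxlen] at h2
  have hxdef : pattExterior τ = stdize (τ.take e) := by
    simp only [pattExterior, ← he]
  have hPe : stdize (τ.take e) = stdize (τ.drop (τ.length - e)) := by
    have h' : (fun k => stdize (τ.take k) = stdize (τ.drop (τ.length - k))) (extLen τ) := by
      unfold extLen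
      exact Nat.findGreatest_spec (P := fun k => stdize (τ.take k) = stdize (τ.drop (τ.length - k))) (Nat.zero_le _) (by simp [stdize])
    rw [he]
    exact h'
  have hPe2 : stdize (τ.take e) = stdize (τ.drop 2) := by
    rw [hPe, show τ.length - e = 2 by omega]
  have hAB : stdize (τ.take (e + 1)) ≠ stdize (τ.drop 1) := by
    intro h
    have h' : e + 1 ≤ extLen τ := by
      unfold extLen
      apply Nat.le_findGreatest (P := fun k => stdize (τ.take k) = stdize (τ.drop (τ.length - k))) (by omega)
      show stdize (τ.take (e + 1)) = stdize (τ.drop (τ.length - (e + 1)))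
      rw [show τ.length - (e + 1) = 1 by omega]
      exact h
    rw [← he] at h'
    omega
  have hEq : openPattInterval (pattExterior τ) τ =
      {stdize (τ.take (e + 1)), stdize (τ.drop 1)} := by
    apply Finset.ext
    intro z
    simp only [openPattInterval, Finset.mem_filter, List.mem_toFinset, Finset.mem_insert,
      Finset.mem_singleton]
    constructor
    · rintro ⟨hz1, hle, hzx, hzτ⟩
      obtain ⟨w, hw, rfl⟩ := List.mem_map.mp hz1
      rw [mem_infixes] at hw
      unfold PattLE at hle
      obtain ⟨u, hu, hux⟩ := List.mem_map.mp hle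
      rw [mem_infixes] at hu
      have hulen : u.length = e := by
        have := congrArg List.length hux
        rw [length_stdize, hxlen] at this
        exact this
      have huw : u.length ≤ w.length := by
        have := hu.length_le
        rw [length_stdize] at this
        exact this
      have hwτ : w.length ≤ τ.length := hw.length_le
      have hcases : w.length = e ∨ w.length = e + 1 ∨ w.length = e + 2 := by omega
      rcases hcases with hl | hl | hl
      · exfalso
        have hwnd : w.Nodup := hnd.sublist hw.sublist
        have hu_eq : u = stdize w := hu.sublist.eq_of_length (by rw [length_stdize]; omega)
        apply hzx
        rw [← hux, hu_eq, stdize_idem hwnd]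
      · have := infix_length_pred hw (by omega)
        rw [show τ.length - 1 = e + 1 by omega] at this
        rcases this with rfl | rfl
        · left; rfl
        · right; rfl
      · exfalso
        have hw_eq : w = τ := hw.sublist.eq_of_length (by omega)
        apply hzτ
        rw [hw_eq, stdize_eq_self hperm]
    · have hmemA : stdize (τ.take (e + 1)) ∈ (infixes τ).map stdize :=
        List.mem_map.mpr ⟨τ.take (e + 1), mem_infixes.mpr (List.take_prefix _ _).isInfix, rfl⟩
      have hmemB : stdize (τ.drop 1) ∈ (infixes τ).map stdize :=
        List.mem_map.mpr ⟨τ.drop 1, mem_infixes.mpr (List.drop_suffix _ _).isInfix, rfl⟩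
      have hlenA : (stdize (τ.take (e + 1))).length = e + 1 := by
        rw [length_stdize, List.length_take]; omega
      have hlenB : (stdize (τ.drop 1)).length = e + 1 := by
        rw [length_stdize, List.length_drop]; omega
      rintro (rfl | rfl)
      · refine ⟨hmemA, ?_, ?_, ?_⟩
        · unfold PattLE
          rw [map_stdize_infixes]
          apply List.mem_map.mpr
          refine ⟨(τ.take (e + 1)).take e, mem_infixes.mpr (List.take_prefix _ _).isInfix, ?_⟩
          rw [List.take_take, show e ⊓ (e + 1) = e by omega, ← hxdef]
        · intro h
          have := congrArg List.length h
          rw [hlenA, hxlen] at this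
          omega
        · intro h
          have := congrArg List.length h
          rw [hlenA] at this
          omega
      · refine ⟨hmemB, ?_, ?_, ?_⟩
        · unfold PattLE
          rw [map_stdize_infixes]
          apply List.mem_map.mpr
          refine ⟨(τ.drop 1).drop 1, mem_infixes.mpr (List.drop_suffix _ _).isInfix, ?_⟩
          rw [List.drop_drop, hxdef, hPe2]
        · intro h
          have := congrArg List.length h
          rw [hlenB, hxlen] at this
          omega
        · intro h
          have := congrArg List.length h
          rw [hlenB] at this
          omega
  rw [hEq]
  exact Finset.card_pair hAB
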